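/- Let d ≥ 1 and let W : ℝ^d → ℝ ∪ {+∞} be measurable, bounded below by a finite constant, and locally integrable, and suppose the limit W_∞ := lim_{|x|→∞} W(x) exists and is finite. Set W̃ := W − W_∞. If the positive part W̃₊ is integrable on ℝ^d and ∫_{ℝ^d} W̃ < 0 (with the integral possibly equal to −∞), then W is unstable: there exists a probability measure ρ on ℝ^d with E(ρ) < (1/2)W_∞. -/

import Mathlib

open MeasureTheory Filter Metric
open scoped ENNReal

/-- `ℝ^d` with the Euclidean structure. -/
abbrev Ed (d : ℕ) : Type := EuclideanSpace ℝ (Fin d)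

/-- The positive part of an extended real number, as an element of `ℝ≥0∞`. -/
noncomputable def EReal.posPart (x : EReal) : ℝ≥0∞ := (x ⊔ 0).abs

/-- The integral of an `EReal`-valued function, defined as the difference (in `EReal`)
of the lower integrals of the positive and the negative parts. -/
noncomputable def eInt {α : Type*} [MeasurableSpace α] (μ : Measure α) (f : α → EReal) :
    EReal :=
  ((∫⁻ x, (f x).posPart ∂μ : ℝ≥0∞) : EReal) - ((∫⁻ x, (-f x).posPart ∂μ : ℝ≥0∞) : EReal)

/-- The interaction energy `E(ρ) = (1/2) ∬ W(x-y) dρ(x) dρ(y)`, with values in `EReal`. -/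
noncomputable def energy {d : ℕ} (W : Ed d → EReal) (ρ : Measure (Ed d)) : EReal :=
  ((1 / 2 : ℝ) : EReal) * eInt (ρ.prod ρ) (fun p => W (p.1 - p.2))

/-- The support of a measure: the set of points all of whose open neighbourhoods have
positive measure. -/
def msupport {α : Type*} [TopologicalSpace α] [MeasurableSpace α] (μ : Measure α) : Set α :=
  {x | ∀ U : Set α, IsOpen U → x ∈ U → 0 < μ U}

/-- `ρ ∈ P_R(ℝ^d)`: the support of `ρ` is contained in the closed ball `B̄(0,R)`. -/
def InBall {d : ℕ} (ρ : Measure (Ed d)) (R : ℝ) : Prop :=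
  msupport ρ ⊆ Metric.closedBall (0 : Ed d) R

/-- `ρ` is a global minimiser of the interaction energy on `P(ℝ^d)`. -/
def IsMinimiser {d : ℕ} (W : Ed d → EReal) (ρ : Measure (Ed d)) : Prop :=
  IsProbabilityMeasure ρ ∧
    ∀ μ : Measure (Ed d), IsProbabilityMeasure μ → energy W ρ ≤ energy W μ

/-- `ρ` is a global minimiser of the interaction energy on `P_R(ℝ^d)`. -/
def IsMinimiserOn {d : ℕ} (W : Ed d → EReal) (ρ : Measure (Ed d)) (R : ℝ) : Prop :=
  IsProbabilityMeasure ρ ∧ InBall ρ R ∧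
    ∀ μ : Measure (Ed d), IsProbabilityMeasure μ → InBall μ R → energy W ρ ≤ energy W μ

section AuxLemmas

open MeasureTheory Filter Metric
open scoped ENNReal

lemma myPosPart_coe (r : ℝ) : EReal.posPart (r : EReal) = ENNReal.ofReal r := by
  rcases le_total r 0 with h | h
  · have : ((r : EReal) ⊔ 0) = ((0:ℝ) : EReal) := by
      simp [sup_eq_right.2 (by exact_mod_cast h : (r:EReal) ≤ 0)]
    simp [EReal.posPart, this, EReal.abs_def, ENNReal.ofReal_eq_zero.2 h]
  · have : ((r : EReal) ⊔ 0) = ((r : ℝ) : EReal) := by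
      simp [sup_eq_left.2 (by exact_mod_cast h : (0:EReal) ≤ r)]
    simp [EReal.posPart, this, EReal.abs_def, abs_of_nonneg h]

@[simp] lemma myPosPart_top : EReal.posPart ⊤ = ⊤ := rfl

@[simp] lemma myPosPart_bot : EReal.posPart ⊥ = 0 := by
  have : ((⊥ : EReal) ⊔ 0) = ((0:ℝ):EReal) := by simp
  simp [EReal.posPart, this, EReal.abs_def]

lemma myPosPart_eq_ite (x : EReal) :
    EReal.posPart x = if x = ⊤ then ⊤ else ENNReal.ofReal x.toReal := by
  induction x using EReal.rec with
  | bot => simp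
  | coe r => simp [myPosPart_coe]
  | top => simp

lemma myPosPart_measurable : Measurable EReal.posPart := by
  have : EReal.posPart = fun x => if x = ⊤ then ⊤ else ENNReal.ofReal x.toReal := by
    funext x; exact myPosPart_eq_ite x
  rw [this]
  exact Measurable.ite (measurableSet_singleton _) measurable_const
    (ENNReal.measurable_ofReal.comp measurable_ereal_toReal)

lemma myPosPart_mono : Monotone EReal.posPart := by
  intro x y hxy
  induction x using EReal.rec with
  | bot => simp
  | top => rw [top_le_iff.1 hxy]
  | coe r =>
    induction y using EReal.rec with
    | bot => exact absurd hxy (by simp)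
    | top => exact le_top
    | coe s =>
      rw [myPosPart_coe, myPosPart_coe]
      exact ENNReal.ofReal_le_ofReal (by exact_mod_cast hxy)

lemma myPosPart_add_le (x y : EReal) :
    EReal.posPart (x + y) ≤ EReal.posPart x + EReal.posPart y := by
  induction x using EReal.rec with
  | bot => simp [EReal.bot_add]
  | top =>
    induction y using EReal.rec with
    | bot => simp [EReal.add_bot]
    | top => simp
    | coe s => simp
  | coe r =>
    induction y using EReal.rec with
    | bot => simp [EReal.add_bot]
    | top => simp
    | coe s =>
      rw [← EReal.coe_add, myPosPart_coe, myPosPart_coe, myPosPart_coe]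
      exact ENNReal.ofReal_add_le

lemma my_coe_ennreal_toReal {x : ℝ≥0∞} (hx : x ≠ ⊤) :
    ((x : EReal)) = ((x.toReal : ℝ) : EReal) := by
  have h1 : ((x : EReal)) ≠ ⊤ := by
    simp [EReal.coe_ennreal_eq_top_iff, hx]
  have := EReal.coe_toReal h1 (EReal.coe_ennreal_ne_bot x)
  rw [EReal.toReal_coe_ennreal] at this
  exact this.symm

lemma my_indicator_mul_indicator {α : Type*} (S T : Set α) (x : α) :
    S.indicator (1 : α → ℝ≥0∞) x * T.indicator 1 x = (S ∩ T).indicator 1 x := by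
  by_cases hS : x ∈ S <;> by_cases hT : x ∈ T <;>
    simp [Set.indicator_apply, hS, hT, Set.mem_inter_iff]

lemma my_lint_prod_sub {d : ℕ} (q : Ed d → ℝ≥0∞) (hq : Measurable q)
    {B : Set (Ed d)} (hB : MeasurableSet B) :
    ∫⁻ p, q (p.1 - p.2) ∂((volume.restrict B).prod (volume.restrict B))
      = ∫⁻ z, q z * volume (B ∩ {x | x - z ∈ B}) := by
  have hmeas : Measurable fun p : Ed d × Ed d => q (p.1 - p.2) :=
    hq.comp (measurable_fst.sub measurable_snd)
  rw [MeasureTheory.lintegral_prod _ hmeas.aemeasurable]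
  have inner : ∀ x : Ed d, ∫⁻ y, q (x - y) ∂(volume.restrict B)
      = ∫⁻ z, B.indicator (1 : Ed d → ℝ≥0∞) (x - z) * q z := by
    intro x
    rw [← lintegral_indicator hB]
    have h1 : ∀ y, B.indicator (fun y => q (x - y)) y
        = B.indicator (1 : Ed d → ℝ≥0∞) y * q (x - y) := by
      intro y; by_cases hy : y ∈ B <;> simp [Set.indicator_apply, hy]
    simp_rw [h1]
    have hmp : MeasurePreserving (fun z : Ed d => x - z) volume volume :=
      Measure.measurePreserving_sub_left volume x
    have h2 := hmp.lintegral_comp (f := fun y => B.indicator (1 : Ed d → ℝ≥0∞) y * q (x - y))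
      (((measurable_one.indicator hB)).mul (hq.comp (measurable_const.sub measurable_id)))
    rw [← h2]
    simp only [sub_sub_cancel]
  simp_rw [inner]
  rw [← lintegral_indicator hB]
  have outer : ∀ x, B.indicator (fun x => ∫⁻ z, B.indicator (1 : Ed d → ℝ≥0∞) (x - z) * q z) x
      = ∫⁻ z, B.indicator (1 : Ed d → ℝ≥0∞) x * (B.indicator (1 : Ed d → ℝ≥0∞) (x - z) * q z) := by
    intro x
    by_cases hx : x ∈ B
    · simp [Set.indicator_apply, hx]
    · simp [Set.indicator_apply, hx]
  simp_rw [outer]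
  rw [lintegral_lintegral_swap]
  · congr 1
    funext z
    have hBz : MeasurableSet {x : Ed d | x - z ∈ B} :=
      (measurable_id.sub measurable_const) hB
    have hS : MeasurableSet (B ∩ {x : Ed d | x - z ∈ B}) := hB.inter hBz
    have h3 : ∀ x, B.indicator (1 : Ed d → ℝ≥0∞) x * (B.indicator (1 : Ed d → ℝ≥0∞) (x - z) * q z)
        = (B ∩ {x | x - z ∈ B}).indicator (1 : Ed d → ℝ≥0∞) x * q z := by
      intro x
      rw [← mul_assoc]
      have h2 : B.indicator (1 : Ed d → ℝ≥0∞) (x - z)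
          = {x | x - z ∈ B}.indicator (1 : Ed d → ℝ≥0∞) x := by
        by_cases h : x - z ∈ B <;> simp [Set.indicator_apply, h, Set.mem_setOf_eq]
      rw [h2, my_indicator_mul_indicator]
    simp_rw [h3]
    rw [lintegral_mul_const _ (measurable_one.indicator hS), lintegral_indicator_one hS, mul_comm]
  · exact (((measurable_one.indicator hB).comp measurable_fst).mul
      (((measurable_one.indicator hB).comp (measurable_fst.sub measurable_snd)).mul
        (hq.comp measurable_snd))).aemeasurable

set_option maxHeartbeats 1000000 in
lemma my_lint_smul_prod {d : ℕ} (c : ℝ≥0∞) (m : Measure (Ed d)) [IsFiniteMeasure m]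
    (ρ : Measure (Ed d)) [SFinite ρ] (hρ : ρ = c • m)
    (g : Ed d × Ed d → ℝ≥0∞) (hg : Measurable g) :
    ∫⁻ p, g p ∂(ρ.prod ρ) = c * (c * ∫⁻ p, g p ∂(m.prod m)) := by
  rw [MeasureTheory.lintegral_prod _ hg.aemeasurable,
    MeasureTheory.lintegral_prod _ hg.aemeasurable]
  have inner : ∀ x, ∫⁻ y, g (x, y) ∂ρ = c * ∫⁻ y, g (x, y) ∂m := by
    intro x; rw [hρ, lintegral_smul_measure, smul_eq_mul]
  simp_rw [inner]
  rw [hρ, lintegral_smul_measure, lintegral_const_mul _ hg.lintegral_prod_right', smul_eq_mul]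

end AuxLemmas
set_option maxHeartbeats 1000000 in
/-- **Lemma (instability, finite limit case).** If `W` is measurable, bounded below by a
finite constant, locally integrable, `W(x) → W_∞ ∈ ℝ` as `|x| → ∞`, the positive part of
`W̃ := W − W_∞` is integrable and `∫ W̃ < 0` (possibly `−∞`), then `W` is unstable. -/
theorem unstable_of_negative_integral
    {d : ℕ} (hd : 1 ≤ d) (W : Ed d → EReal) (hWmeas : Measurable W)
    (c : ℝ) (hbound : ∀ x, (c : EReal) ≤ W x)
    (hloc : ∀ (x : Ed d) (r : ℝ), 0 < r →
      ∫⁻ y in Metric.ball x r, (W y).abs ∂volume < ⊤)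
    (Winf : ℝ) (hlim : Tendsto W (cocompact (Ed d)) (nhds ((Winf : ℝ) : EReal)))
    (hposint : ∫⁻ x, (W x - (Winf : EReal)).posPart ∂volume < ⊤)
    (hneg : eInt volume (fun x => W x - (Winf : EReal)) < 0) :
    ∃ ρ : Measure (Ed d), IsProbabilityMeasure ρ ∧
      energy W ρ < ((1 / 2 : ℝ) : EReal) * ((Winf : ℝ) : EReal) := by
  classical
  haveI : Nonempty (Fin d) := ⟨⟨0, hd⟩⟩
  haveI : Nontrivial (Ed d) := inferInstance
  -- basic measurable functions
  have hsubmono : Monotone fun x : EReal => x - (Winf : EReal) :=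
    fun u v huv => EReal.sub_le_sub huv le_rfl
  have hsubmeas : Measurable fun z : Ed d => W z - (Winf : EReal) :=
    hsubmono.measurable.comp hWmeas
  have hnegmono : Antitone fun x : EReal => -x := fun u v huv => EReal.neg_le_neg_iff.2 huv
  set p : Ed d → ℝ≥0∞ := fun z => (W z - (Winf : EReal)).posPart with hp_def
  set n : Ed d → ℝ≥0∞ := fun z => (-(W z - (Winf : EReal))).posPart with hn_def
  have hp_meas : Measurable p := myPosPart_measurable.comp hsubmeas
  have hn_meas : Measurable n :=
    myPosPart_measurable.comp (hnegmono.measurable.comp hsubmeas)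
  -- the total positive mass
  set A : ℝ≥0∞ := ∫⁻ z, p z ∂volume with hA_def
  have hA : A < ⊤ := hposint
  -- pointwise bound on n
  have hnb : ∀ z, n z ≤ ENNReal.ofReal (Winf - c) := by
    intro z
    have h1 : (c : EReal) - (Winf : EReal) ≤ W z - (Winf : EReal) :=
      EReal.sub_le_sub (hbound z) le_rfl
    have h2 : -(W z - (Winf : EReal)) ≤ -((c : EReal) - (Winf : EReal)) :=
      EReal.neg_le_neg_iff.2 h1
    have h3 : -((c : EReal) - (Winf : EReal)) = ((Winf - c : ℝ) : EReal) := by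
      rw [← EReal.coe_sub, ← EReal.coe_neg]; norm_num
    calc n z ≤ EReal.posPart ((Winf - c : ℝ) : EReal) := myPosPart_mono (h3 ▸ h2)
    _ = ENNReal.ofReal (Winf - c) := myPosPart_coe _
  -- A < ∫ n
  have hAN : A < ∫⁻ z, n z ∂volume := by
    by_contra h
    push_neg at h
    have hN't : (∫⁻ z, n z ∂volume) ≠ ⊤ := (lt_of_le_of_lt h hA).ne
    refine absurd hneg (not_lt.2 ?_)
    unfold eInt
    rw [my_coe_ennreal_toReal hA.ne, my_coe_ennreal_toReal hN't, ← EReal.coe_sub]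
    have : (0:ℝ) ≤ A.toReal - (∫⁻ z, n z ∂volume).toReal := by
      have := ENNReal.toReal_mono hA.ne h
      linarith
    exact_mod_cast this
  -- choose S
  obtain ⟨k, hk⟩ : ∃ k : ℕ, A < ∫⁻ z in ball (0 : Ed d) (k : ℝ), n z ∂volume := by
    have hsup : (∫⁻ z, n z ∂volume)
        = ⨆ k : ℕ, ∫⁻ z in ball (0 : Ed d) (k : ℝ), n z ∂volume := by
      have h1 : ∀ k : ℕ, ∫⁻ z in ball (0 : Ed d) (k : ℝ), n z ∂volume
          = ∫⁻ z, (ball (0 : Ed d) (k : ℝ)).indicator n z ∂volume := by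
        intro k; rw [lintegral_indicator measurableSet_ball]
      simp_rw [h1]
      rw [← lintegral_iSup (fun k => hn_meas.indicator measurableSet_ball)]
      · congr 1
        funext z
        obtain ⟨k, hk⟩ := exists_nat_gt ‖z‖
        apply le_antisymm
        · refine le_iSup_iff.2 fun b hb => ?_
          have := hb k
          rwa [Set.indicator_of_mem (by simpa [mem_ball, dist_eq_norm] using hk)] at this
        · exact iSup_le fun k => Set.indicator_le_self _ _ z
      · intro i j hij
        exact fun z => Set.indicator_le_indicator_of_subset
          (ball_subset_ball (by exact_mod_cast hij)) (fun _ => zero_le) z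
    rw [hsup] at hAN
    exact lt_iSup_iff.1 hAN
  set S : ℝ := max (k : ℝ) 1 with hS_def
  have hS1 : (1 : ℝ) ≤ S := le_max_right _ _
  have hS0 : (0 : ℝ) < S := lt_of_lt_of_le one_pos hS1
  set Bv : ℝ≥0∞ := ∫⁻ z in ball (0 : Ed d) S, n z ∂volume with hBv_def
  have hABv : A < Bv := lt_of_lt_of_le hk
    (lintegral_mono' (Measure.restrict_mono (ball_subset_ball (le_max_left _ _)) le_rfl) le_rfl)
  have hBvt : Bv < ⊤ := by
    calc Bv ≤ ∫⁻ _ in ball (0 : Ed d) S, ENNReal.ofReal (Winf - c) ∂volume :=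
          lintegral_mono fun z => hnb z
    _ = ENNReal.ofReal (Winf - c) * volume (ball (0 : Ed d) S) := by
          rw [lintegral_const, Measure.restrict_apply_univ]
    _ < ⊤ := ENNReal.mul_lt_top ENNReal.ofReal_lt_top measure_ball_lt_top
  set a : ℝ := A.toReal with ha_def
  set b : ℝ := Bv.toReal with hb_def
  have hab : a < b := by
    exact ENNReal.toReal_strict_mono hBvt.ne hABv
  have ha0 : 0 ≤ a := ENNReal.toReal_nonneg
  have hb0 : 0 < b := lt_of_le_of_lt ha0 hab
  -- choose R
  obtain ⟨R, hRS, hRa⟩ : ∃ R : ℝ, S < R ∧ a < b * (1 - S / 2 / R) ^ d := by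
    have h1 : Tendsto (fun R : ℝ => S / 2 / R) atTop (nhds 0) :=
      tendsto_const_nhds.div_atTop tendsto_id
    have h0 : Tendsto (fun R : ℝ => 1 - S / 2 / R) atTop (nhds (1 - 0)) :=
      (tendsto_const_nhds : Tendsto (fun _ : ℝ => (1:ℝ)) atTop _).sub h1
    have h2 : Tendsto (fun R : ℝ => b * (1 - S / 2 / R) ^ d) atTop (nhds b) := by
      have := (h0.pow d).const_mul b
      simpa using this
    have h3 : ∀ᶠ R in atTop, a < b * (1 - S / 2 / R) ^ d :=
      h2.eventually (eventually_gt_nhds hab)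
    exact ((eventually_gt_atTop S).and h3).exists
  have hR0 : (0 : ℝ) < R := lt_trans hS0 hRS
  have hRS2 : (0 : ℝ) < R - S / 2 := by linarith
  have hkeyR : a * R ^ d < b * (R - S / 2) ^ d := by
    have h1 : (1 - S / 2 / R) = (R - S / 2) / R := by field_simp
    rw [h1, div_pow] at hRa
    calc a * R ^ d < b * ((R - S / 2) ^ d / R ^ d) * R ^ d := by
          exact mul_lt_mul_of_pos_right hRa (pow_pos hR0 d)
    _ = b * (R - S / 2) ^ d := by field_simp
  -- the ball and measure
  set Br : Set (Ed d) := ball (0 : Ed d) R with hBr_def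
  set VB : ℝ≥0∞ := volume Br with hVB_def
  have hVB0 : VB ≠ 0 := (measure_ball_pos volume _ hR0).ne'
  have hVBt : VB ≠ ⊤ := measure_ball_lt_top.ne
  set ρ : Measure (Ed d) := VB⁻¹ • volume.restrict Br with hρ_def
  have hρprob : IsProbabilityMeasure ρ := by
    constructor
    rw [hρ_def, Measure.smul_apply, Measure.restrict_apply_univ, smul_eq_mul]
    exact ENNReal.inv_mul_cancel hVB0 hVBt
  refine ⟨ρ, hρprob, ?_⟩
  haveI := hρprob
  haveI : IsFiniteMeasure (volume.restrict Br) :=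
    ⟨by rw [Measure.restrict_apply_univ]; exact measure_ball_lt_top⟩
  set μ : Measure (Ed d × Ed d) := ρ.prod ρ with hμ_def
  haveI : IsProbabilityMeasure μ := by rw [hμ_def]; infer_instance
  -- the convolution-type formula
  set m : Ed d → ℝ≥0∞ := fun z => volume (Br ∩ {x | x - z ∈ Br}) with hm_def
  have hIμ : ∀ q : Ed d → ℝ≥0∞, Measurable q →
      ∫⁻ pt, q (pt.1 - pt.2) ∂μ = VB⁻¹ * (VB⁻¹ * ∫⁻ z, q z * m z ∂volume) := by
    intro q hq
    rw [hμ_def, my_lint_smul_prod VB⁻¹ (volume.restrict Br) ρ hρ_def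
      (fun pt => q (pt.1 - pt.2))
      (show Measurable fun pt : Ed d × Ed d => q (pt.1 - pt.2) from
        hq.comp (measurable_fst.sub measurable_snd)),
      my_lint_prod_sub q hq measurableSet_ball]
  -- bounds on the two integrals
  have hm_le : ∀ z, m z ≤ VB := fun z => measure_mono Set.inter_subset_left
  have hIp_le : (∫⁻ z, p z * m z ∂volume) ≤ A * VB := by
    calc (∫⁻ z, p z * m z ∂volume) ≤ ∫⁻ z, p z * VB ∂volume :=
          lintegral_mono fun z => mul_le_mul_right (hm_le z) _
    _ = A * VB := lintegral_mul_const _ hp_meas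
  have hC_le : ∀ z ∈ ball (0 : Ed d) S, volume (ball (0 : Ed d) (R - S / 2)) ≤ m z := by
    intro z hz
    have hz' : ‖z‖ < S := by simpa [mem_ball, dist_eq_norm] using hz
    have hhalf : ‖(2 : ℝ)⁻¹ • z‖ < S / 2 := by
      rw [norm_smul]
      simp only [norm_inv, Real.norm_ofNat]
      rw [inv_mul_eq_div, div_lt_div_iff_of_pos_right two_pos] at *
      linarith [hz']
    have hsubset : ball ((2 : ℝ)⁻¹ • z) (R - S / 2) ⊆ Br ∩ {x | x - z ∈ Br} := by
      intro x hx
      rw [mem_ball, dist_eq_norm] at hx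
      constructor
      · rw [hBr_def, mem_ball, dist_eq_norm, sub_zero]
        calc ‖x‖ = ‖(x - (2:ℝ)⁻¹ • z) + (2:ℝ)⁻¹ • z‖ := by congr 1; abel
        _ ≤ ‖x - (2:ℝ)⁻¹ • z‖ + ‖(2:ℝ)⁻¹ • z‖ := norm_add_le _ _
        _ < (R - S / 2) + S / 2 := add_lt_add hx hhalf
        _ = R := by ring
      · show x - z ∈ Br
        rw [hBr_def, mem_ball, dist_eq_norm, sub_zero]
        have hzz : x - z = (x - (2:ℝ)⁻¹ • z) - (2:ℝ)⁻¹ • z := by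
          rw [sub_sub, ← add_smul]
          norm_num
        rw [hzz]
        calc ‖(x - (2:ℝ)⁻¹ • z) - (2:ℝ)⁻¹ • z‖
            ≤ ‖x - (2:ℝ)⁻¹ • z‖ + ‖(2:ℝ)⁻¹ • z‖ := norm_sub_le _ _
        _ < (R - S / 2) + S / 2 := add_lt_add hx hhalf
        _ = R := by ring
    calc volume (ball (0 : Ed d) (R - S / 2))
        = volume (ball ((2 : ℝ)⁻¹ • z) (R - S / 2)) :=
          (Measure.addHaar_ball_center volume _ _).symm
    _ ≤ m z := measure_mono hsubset
  set C : ℝ≥0∞ := volume (ball (0 : Ed d) (R - S / 2)) with hC_def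
  have hIn_ge : Bv * C ≤ ∫⁻ z, n z * m z ∂volume := by
    calc Bv * C = ∫⁻ z in ball (0 : Ed d) S, n z * C ∂volume := by
          rw [lintegral_mul_const _ hn_meas]
    _ ≤ ∫⁻ z in ball (0 : Ed d) S, n z * m z ∂volume := by
          refine lintegral_mono_ae ?_
          rw [ae_restrict_iff' measurableSet_ball]
          filter_upwards with z hz
          exact mul_le_mul_right (hC_le z hz) _
    _ ≤ ∫⁻ z, n z * m z ∂volume := setLIntegral_le_lintegral _ _
  -- A * VB < Bv * C
  have hkey : A * VB < Bv * C := by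
    set U : ℝ≥0∞ := volume (ball (0 : Ed d) 1) with hU_def
    have hU0 : U ≠ 0 := (measure_ball_pos volume _ one_pos).ne'
    have hUt : U ≠ ⊤ := measure_ball_lt_top.ne
    have hVB_eq : VB = ENNReal.ofReal (R ^ d) * U := by
      rw [hVB_def, hBr_def, Measure.addHaar_ball volume _ hR0.le, finrank_euclideanSpace_fin]
    have hC_eq : C = ENNReal.ofReal ((R - S / 2) ^ d) * U := by
      rw [hC_def, Measure.addHaar_ball volume _ hRS2.le, finrank_euclideanSpace_fin]
    have hA_eq : A = ENNReal.ofReal a := (ENNReal.ofReal_toReal hA.ne).symm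
    have hBv_eq : Bv = ENNReal.ofReal b := (ENNReal.ofReal_toReal hBvt.ne).symm
    rw [hVB_eq, hC_eq, hA_eq, hBv_eq, ← mul_assoc, ← mul_assoc,
      ← ENNReal.ofReal_mul ha0, ← ENNReal.ofReal_mul hb0.le]
    rw [ENNReal.mul_lt_mul_iff_left hU0 hUt]
    exact ENNReal.ofReal_lt_ofReal_iff (by positivity) |>.2 hkeyR
  -- the four lintegrals over μ
  set pμ : ℝ≥0∞ := ∫⁻ pt, p (pt.1 - pt.2) ∂μ with hpμ_def
  set nμ : ℝ≥0∞ := ∫⁻ pt, n (pt.1 - pt.2) ∂μ with hnμ_def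
  have hVBi0 : VB⁻¹ ≠ 0 := ENNReal.inv_ne_zero.2 hVBt
  have hVBit : VB⁻¹ ≠ ⊤ := ENNReal.inv_ne_top.2 hVB0
  have hpμ_lt_nμ : pμ < nμ := by
    rw [hpμ_def, hnμ_def, hIμ p hp_meas, hIμ n hn_meas]
    refine (ENNReal.mul_lt_mul_iff_right hVBi0 hVBit).2 ?_
    refine (ENNReal.mul_lt_mul_iff_right hVBi0 hVBit).2 ?_
    exact lt_of_le_of_lt hIp_le (lt_of_lt_of_le hkey hIn_ge)
  have hpμt : pμ ≠ ⊤ := by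
    rw [hpμ_def, hIμ p hp_meas]
    exact (ENNReal.mul_lt_top hVBit.lt_top (ENNReal.mul_lt_top hVBit.lt_top
      (lt_of_le_of_lt hIp_le (ENNReal.mul_lt_top hA hVBt.lt_top)))).ne
  have hnμt : nμ ≠ ⊤ := by
    have : nμ ≤ ENNReal.ofReal (Winf - c) := by
      rw [hnμ_def]
      calc (∫⁻ pt, n (pt.1 - pt.2) ∂μ) ≤ ∫⁻ _, ENNReal.ofReal (Winf - c) ∂μ :=
            lintegral_mono fun pt => hnb _
      _ = ENNReal.ofReal (Winf - c) := by rw [lintegral_const, measure_univ, mul_one]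
    exact (lt_of_le_of_lt this ENNReal.ofReal_lt_top).ne
  -- the positive and negative parts of W over μ
  set Pμ : ℝ≥0∞ := ∫⁻ pt, (W (pt.1 - pt.2)).posPart ∂μ with hPμ_def
  set Nμ : ℝ≥0∞ := ∫⁻ pt, (-(W (pt.1 - pt.2))).posPart ∂μ with hNμ_def
  have hWprod_meas : Measurable fun pt : Ed d × Ed d => W (pt.1 - pt.2) :=
    hWmeas.comp (measurable_fst.sub measurable_snd)
  have hPμt : Pμ ≠ ⊤ := by
    have hpt : ∀ pt : Ed d × Ed d, (W (pt.1 - pt.2)).posPart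
        ≤ p (pt.1 - pt.2) + ENNReal.ofReal |Winf| := by
      intro pt
      have he : W (pt.1 - pt.2) = (W (pt.1 - pt.2) - (Winf : EReal)) + (Winf : EReal) :=
        EReal.sub_add_cancel.symm
      calc (W (pt.1 - pt.2)).posPart
          = ((W (pt.1 - pt.2) - (Winf : EReal)) + (Winf : EReal)).posPart := by rw [← he]
      _ ≤ (W (pt.1 - pt.2) - (Winf : EReal)).posPart + ((Winf : ℝ) : EReal).posPart :=
            myPosPart_add_le _ _
      _ ≤ p (pt.1 - pt.2) + ENNReal.ofReal |Winf| := by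
            rw [myPosPart_coe]
            exact add_le_add_right (ENNReal.ofReal_le_ofReal (le_abs_self _)) _
    have : Pμ ≤ pμ + ENNReal.ofReal |Winf| := by
      rw [hPμ_def, hpμ_def]
      calc (∫⁻ pt, (W (pt.1 - pt.2)).posPart ∂μ)
          ≤ ∫⁻ pt, p (pt.1 - pt.2) + ENNReal.ofReal |Winf| ∂μ := lintegral_mono hpt
      _ = (∫⁻ pt, p (pt.1 - pt.2) ∂μ) + ENNReal.ofReal |Winf| := by
            rw [lintegral_add_right _ measurable_const, lintegral_const, measure_univ, mul_one]
    exact (lt_of_le_of_lt this (ENNReal.add_lt_top.2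
      ⟨hpμt.lt_top, ENNReal.ofReal_lt_top⟩)).ne
  have hNμt : Nμ ≠ ⊤ := by
    have hpt : ∀ pt : Ed d × Ed d, (-(W (pt.1 - pt.2))).posPart ≤ ENNReal.ofReal |c| := by
      intro pt
      calc (-(W (pt.1 - pt.2))).posPart ≤ (-(c : EReal)).posPart :=
            myPosPart_mono (EReal.neg_le_neg_iff.2 (hbound _))
      _ = ENNReal.ofReal (-c) := by rw [← EReal.coe_neg, myPosPart_coe]
      _ ≤ ENNReal.ofReal |c| := ENNReal.ofReal_le_ofReal (neg_le_abs _)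
    have : Nμ ≤ ENNReal.ofReal |c| := by
      rw [hNμ_def]
      calc (∫⁻ pt, (-(W (pt.1 - pt.2))).posPart ∂μ)
          ≤ ∫⁻ _, ENNReal.ofReal |c| ∂μ := lintegral_mono hpt
      _ = ENNReal.ofReal |c| := by rw [lintegral_const, measure_univ, mul_one]
    exact (lt_of_le_of_lt this ENNReal.ofReal_lt_top).ne
  -- a.e. finiteness
  have hae : ∀ᵐ pt ∂μ, W (pt.1 - pt.2) ≠ ⊤ := by
    have h1 : ∀ᵐ pt ∂μ, p (pt.1 - pt.2) < ⊤ :=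
      ae_lt_top (hp_meas.comp (measurable_fst.sub measurable_snd)) hpμt
    filter_upwards [h1] with pt hpt htop
    rw [hp_def] at hpt
    simp only [htop, EReal.top_sub_coe, myPosPart_top, lt_self_iff_false] at hpt
  -- the real-valued function
  set F : Ed d × Ed d → ℝ := fun pt => (W (pt.1 - pt.2)).toReal with hF_def
  have hFmeas : Measurable F := measurable_ereal_toReal.comp hWprod_meas
  have hWcoe : ∀ pt : Ed d × Ed d, W (pt.1 - pt.2) ≠ ⊤ →
      W (pt.1 - pt.2) = ((F pt : ℝ) : EReal) := by
    intro pt htop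
    have hbot : W (pt.1 - pt.2) ≠ ⊥ :=
      (lt_of_lt_of_le (EReal.bot_lt_coe c) (hbound _)).ne'
    exact (EReal.coe_toReal htop hbot).symm
  -- a.e. identities
  have e1 : ∀ᵐ pt ∂μ, (W (pt.1 - pt.2)).posPart = ENNReal.ofReal (F pt) := by
    filter_upwards [hae] with pt htop
    rw [hWcoe pt htop, myPosPart_coe]
  have e2 : ∀ᵐ pt ∂μ, (-(W (pt.1 - pt.2))).posPart = ENNReal.ofReal (-F pt) := by
    filter_upwards [hae] with pt htop
    rw [hWcoe pt htop, ← EReal.coe_neg, myPosPart_coe]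
  have e3 : ∀ᵐ pt ∂μ, p (pt.1 - pt.2) = ENNReal.ofReal (F pt - Winf) := by
    filter_upwards [hae] with pt htop
    simp only [hp_def]
    rw [hWcoe pt htop, ← EReal.coe_sub, myPosPart_coe]
  have e4 : ∀ᵐ pt ∂μ, n (pt.1 - pt.2) = ENNReal.ofReal (-(F pt - Winf)) := by
    filter_upwards [hae] with pt htop
    simp only [hn_def]
    rw [hWcoe pt htop, ← EReal.coe_sub, ← EReal.coe_neg, myPosPart_coe]
  have hPμ_eq : Pμ = ∫⁻ pt, ENNReal.ofReal (F pt) ∂μ := lintegral_congr_ae e1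
  have hNμ_eq : Nμ = ∫⁻ pt, ENNReal.ofReal (-F pt) ∂μ := lintegral_congr_ae e2
  have hpμ_eq : pμ = ∫⁻ pt, ENNReal.ofReal (F pt - Winf) ∂μ := lintegral_congr_ae e3
  have hnμ_eq : nμ = ∫⁻ pt, ENNReal.ofReal (-(F pt - Winf)) ∂μ := lintegral_congr_ae e4
  -- integrability of F
  have hFint : Integrable F μ := by
    refine ⟨hFmeas.aestronglyMeasurable, ?_⟩
    have hnorm : (∫⁻ pt, ‖F pt‖ₑ ∂μ) = Pμ + Nμ := by
      rw [hPμ_eq, hNμ_eq, ← lintegral_add_left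
        (show Measurable fun pt => ENNReal.ofReal (F pt) from
          ENNReal.measurable_ofReal.comp hFmeas)]
      refine lintegral_congr fun pt => ?_
      rw [Real.enorm_eq_ofReal_abs]
      rcases le_total 0 (F pt) with h | h
      · rw [abs_of_nonneg h, ENNReal.ofReal_of_nonpos (neg_nonpos.2 h), add_zero]
      · rw [abs_of_nonpos h, ENNReal.ofReal_of_nonpos h, zero_add]
    rw [HasFiniteIntegral, hnorm]
    exact ENNReal.add_lt_top.2 ⟨hPμt.lt_top, hNμt.lt_top⟩
  have hGint : Integrable (fun pt => F pt - Winf) μ := hFint.sub (integrable_const _)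
  -- Bochner identities
  have hIF : ∫ pt, F pt ∂μ = Pμ.toReal - Nμ.toReal := by
    rw [integral_eq_lintegral_pos_part_sub_lintegral_neg_part hFint, hPμ_eq, hNμ_eq]
  have hIG : ∫ pt, (F pt - Winf) ∂μ = pμ.toReal - nμ.toReal := by
    rw [integral_eq_lintegral_pos_part_sub_lintegral_neg_part hGint, hpμ_eq, hnμ_eq]
  have hIG2 : ∫ pt, (F pt - Winf) ∂μ = (∫ pt, F pt ∂μ) - Winf := by
    rw [integral_sub hFint (integrable_const _), integral_const, probReal_univ]
    simp
  have hreal : Pμ.toReal - Nμ.toReal = Winf + (pμ.toReal - nμ.toReal) := by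
    rw [← hIF, ← hIG]
    rw [hIG2]
    ring
  have hptn : pμ.toReal < nμ.toReal := ENNReal.toReal_strict_mono hnμt hpμ_lt_nμ
  -- final computation
  unfold energy eInt
  rw [my_coe_ennreal_toReal hPμt, my_coe_ennreal_toReal hNμt, ← EReal.coe_sub, ← EReal.coe_mul,
    ← EReal.coe_mul]
  rw [EReal.coe_lt_coe_iff]
  have : Pμ.toReal - Nμ.toReal < Winf := by rw [hreal]; linarith
  calc 1 / 2 * (Pμ.toReal - Nμ.toReal) < 1 / 2 * Winf := by linarith
  _ = 1 / 2 * Winf := rfl
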